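/- Let n be an odd positive integer and let d1, d2 be invertible elements of Z/nZ such that d1 - d2 is also invertible. Then for every positive integer m with m ≡ 0 (mod n) or m ≡ -1 (mod n), the doubly arithmetic triangle DAT(a,d1,d2,m) is balanced in Z/nZ, for every a in Z/nZ. -/

import Mathlib

def DAT (n : ℕ) (a d1 d2 : ZMod n) (m : ℕ) : Multiset (ZMod n) :=
  ((Finset.range m ×ˢ Finset.range m).filter (fun p => p.1 + p.2 < m)).val.map
    (fun p => a + p.1 • d1 + p.2 • d2)

def IsBalanced {n : ℕ} (M : Multiset (ZMod n)) : Prop :=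
  ∀ x y : ZMod n, M.count x = M.count y

def Scount (n m : ℕ) (d1 d2 v : ZMod n) : ℕ :=
  (((Finset.range m ×ˢ Finset.range m)).filter
    (fun p => p.1 + p.2 < m ∧ (p.1 : ZMod n) * d1 + (p.2 : ZMod n) * d2 = v)).card

lemma cast_eq_iff (n : ℕ) [NeZero n] (m : ℕ) (c : ZMod n) :
    (m : ZMod n) = c ↔ m % n = c.val := by
  constructor
  · intro h; rw [← h, ZMod.val_natCast]
  · intro h
    have : (((m % n : ℕ)) : ZMod n) = ((c.val : ℕ) : ZMod n) := by rw [h]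
    rwa [ZMod.natCast_mod, ZMod.natCast_rightInverse c] at this

lemma count_range_cast (n : ℕ) [NeZero n] (m : ℕ) (c : ZMod n) :
    ((Finset.range m).filter (fun k : ℕ => (k : ZMod n) = c)).card
      = m / n + if c.val < m % n then 1 else 0 := by
  have hn : 0 < n := Nat.pos_of_ne_zero (NeZero.ne n)
  have hval : c.val < n := ZMod.val_lt c
  induction m with
  | zero => simp
  | succ m ih =>
    obtain ⟨q, r, hqr, hr⟩ : ∃ q r, m = n * q + r ∧ r < n :=
      ⟨m / n, m % n, (Nat.div_add_mod m n).symm, Nat.mod_lt _ hn⟩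
    have hdiv : m / n = q := by
      rw [hqr, Nat.mul_add_div hn, Nat.div_eq_of_lt hr, Nat.add_zero]
    have hmod : m % n = r := by rw [hqr, Nat.mul_add_mod, Nat.mod_eq_of_lt hr]
    have hstep : (m + 1) / n + (if c.val < (m + 1) % n then 1 else 0)
        = m / n + (if c.val < m % n then 1 else 0)
          + (if (m : ZMod n) = c then 1 else 0) := by
      have hcv : ((m : ZMod n) = c) ↔ r = c.val := by
        rw [cast_eq_iff, hmod]
      by_cases hrn : r + 1 = n
      · have hm1 : m + 1 = n * (q + 1) := by rw [Nat.mul_succ]; omega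
        have hdiv1 : (m + 1) / n = q + 1 := by
          rw [hm1, Nat.mul_div_cancel_left _ hn]
        have hmod1 : (m + 1) % n = 0 := by rw [hm1, Nat.mul_mod_right]
        rw [hdiv1, hmod1, hdiv, hmod]
        by_cases h : (m : ZMod n) = c
        · have : r = c.val := hcv.1 h
          rw [if_pos h]
          split_ifs <;> omega
        · have : r ≠ c.val := fun hh => h (hcv.2 hh)
          rw [if_neg h]
          split_ifs <;> omega
      · have hm1 : m + 1 = n * q + (r + 1) := by omega
        have hdiv1 : (m + 1) / n = q := by
          rw [hm1, Nat.mul_add_div hn, Nat.div_eq_of_lt (by omega), Nat.add_zero]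
        have hmod1 : (m + 1) % n = r + 1 := by
          rw [hm1, Nat.mul_add_mod, Nat.mod_eq_of_lt (by omega)]
        rw [hdiv1, hmod1, hdiv, hmod]
        by_cases h : (m : ZMod n) = c
        · have : r = c.val := hcv.1 h
          rw [if_pos h]
          split_ifs <;> omega
        · have : r ≠ c.val := fun hh => h (hcv.2 hh)
          rw [if_neg h]
          split_ifs <;> omega
    rw [Finset.range_add_one, Finset.filter_insert, hstep]
    by_cases h : (m : ZMod n) = c
    · rw [if_pos h, if_pos h, Finset.card_insert_of_notMem (by simp), ih]
    · rw [if_neg h, if_neg h, ih, Nat.add_zero]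

lemma val_lt_iff (n : ℕ) [NeZero n] (x : ZMod n) : x.val < n - 1 ↔ x ≠ -1 := by
  have hn : 0 < n := Nat.pos_of_ne_zero (NeZero.ne n)
  obtain ⟨k, rfl⟩ : ∃ k, n = k + 1 := ⟨n - 1, by omega⟩
  have hx : x.val < k + 1 := ZMod.val_lt x
  constructor
  · rintro h rfl
    rw [ZMod.val_neg_one] at h
    omega
  · intro h
    by_contra hc
    have hv : x.val = k := by omega
    exact h (ZMod.val_injective (k+1) (by rw [hv, ZMod.val_neg_one]))

lemma scount_shift (n : ℕ) [NeZero n] (d1 d2 : ZMod n)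
    (h2 : IsUnit d2) (h12 : IsUnit (d1 - d2)) (m : ℕ) (hm0 : 0 < m)
    (hm : n ∣ m ∨ n ∣ (m + 1)) (v : ZMod n) :
    Scount n m d1 d2 (v + d1) = Scount n m d1 d2 v := by
  classical
  have hn : 0 < n := Nat.pos_of_ne_zero (NeZero.ne n)
  have hd2 : d2 * d2⁻¹ = 1 := ZMod.mul_inv_of_unit d2 h2
  have hd2' : d2⁻¹ * d2 = 1 := ZMod.inv_mul_of_unit d2 h2
  have hd12 : (d1 - d2) * (d1 - d2)⁻¹ = 1 := ZMod.mul_inv_of_unit _ h12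
  have hd12' : (d1 - d2)⁻¹ * (d1 - d2) = 1 := ZMod.inv_mul_of_unit _ h12
  set S : ZMod n → Finset (ℕ × ℕ) := fun w =>
    ((Finset.range m ×ˢ Finset.range m)).filter
      (fun p => p.1 + p.2 < m ∧ (p.1 : ZMod n) * d1 + (p.2 : ZMod n) * d2 = w) with hS
  have split1 : ((S (v+d1)).filter (fun p => p.1 = 0)).card
      + ((S (v+d1)).filter (fun p => ¬ p.1 = 0)).card = (S (v+d1)).card :=
    Finset.card_filter_add_card_filter_not _
  have split2 : ((S v).filter (fun p => p.1 + p.2 + 1 < m)).card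
      + ((S v).filter (fun p => ¬ p.1 + p.2 + 1 < m)).card = (S v).card :=
    Finset.card_filter_add_card_filter_not _
  have hbij : ((S v).filter (fun p => p.1 + p.2 + 1 < m)).card
      = ((S (v+d1)).filter (fun p => ¬ p.1 = 0)).card := by
    refine Finset.card_bij' (fun p _ => (p.1 + 1, p.2)) (fun p _ => (p.1 - 1, p.2))
      ?hi ?hj ?left ?right
    case hi =>
      intro p hp
      simp only [hS, Finset.mem_filter, Finset.mem_product, Finset.mem_range] at hp ⊢
      obtain ⟨⟨⟨h1, h2'⟩, h3, h4⟩, h5⟩ := hp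
      refine ⟨⟨⟨by omega, by omega⟩, by omega, ?_⟩, by omega⟩
      push_cast
      linear_combination h4
    case hj =>
      intro p hp
      simp only [hS, Finset.mem_filter, Finset.mem_product, Finset.mem_range] at hp ⊢
      obtain ⟨⟨⟨h1, h2'⟩, h3, h4⟩, h5⟩ := hp
      refine ⟨⟨⟨by omega, by omega⟩, by omega, ?_⟩, by omega⟩
      have hc : ((p.1 - 1 : ℕ) : ZMod n) = (p.1 : ZMod n) - 1 := by
        rw [Nat.cast_sub (by omega)]; push_cast; ring
      rw [hc]
      linear_combination h4
    case left =>
      intro p hp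
      simp
    case right =>
      intro p hp
      simp only [hS, Finset.mem_filter, Finset.mem_product, Finset.mem_range] at hp
      have h5 : p.1 ≠ 0 := hp.2
      have h6 : p.1 - 1 + 1 = p.1 := by omega
      simp [h6]
  have hA : ((S (v+d1)).filter (fun p => p.1 = 0)).card
      = ((Finset.range m).filter (fun k : ℕ => (k : ZMod n) = (v + d1) * d2⁻¹)).card := by
    refine Finset.card_bij' (fun p _ => p.2) (fun k _ => (0, k)) ?hi ?hj ?left ?right
    case hi =>
      intro p hp
      simp only [hS, Finset.mem_filter, Finset.mem_product, Finset.mem_range] at hp ⊢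
      obtain ⟨⟨⟨h1, h2'⟩, h3, h4⟩, h5⟩ := hp
      refine ⟨h2', ?_⟩
      rw [h5] at h4
      push_cast at h4
      rw [zero_mul, zero_add] at h4
      rw [← h4, mul_assoc, hd2, mul_one]
    case hj =>
      intro k hk
      simp only [Finset.mem_filter, Finset.mem_range] at hk
      simp only [hS, Finset.mem_filter, Finset.mem_product, Finset.mem_range]
      refine ⟨⟨⟨by omega, hk.1⟩, by omega, ?_⟩, by trivial⟩
      push_cast
      rw [zero_mul, zero_add, hk.2, mul_assoc, hd2', mul_one]
    case left =>
      intro p hp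
      simp only [hS, Finset.mem_filter] at hp
      have h5 : p.1 = 0 := hp.2
      simp [Prod.ext_iff, h5]
    case right =>
      intro k hk
      rfl
  have hB : ((S v).filter (fun p => ¬ p.1 + p.2 + 1 < m)).card
      = ((Finset.range m).filter
          (fun k : ℕ => (k : ZMod n) = (v - ((m - 1 : ℕ) : ZMod n) * d2) * (d1 - d2)⁻¹)).card := by
    refine Finset.card_bij' (fun p _ => p.1) (fun k _ => (k, m - 1 - k)) ?hi ?hj ?left ?right
    case hi =>
      intro p hp
      simp only [hS, Finset.mem_filter, Finset.mem_product, Finset.mem_range] at hp ⊢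
      obtain ⟨⟨⟨h1, h2'⟩, h3, h4⟩, h5⟩ := hp
      refine ⟨h1, ?_⟩
      have hj : p.2 = m - 1 - p.1 := by omega
      have hc : ((p.2 : ℕ) : ZMod n) = ((m - 1 : ℕ) : ZMod n) - (p.1 : ZMod n) := by
        rw [hj, Nat.cast_sub (by omega)]
      rw [hc] at h4
      have key : (p.1 : ZMod n) * (d1 - d2) = v - ((m - 1 : ℕ) : ZMod n) * d2 := by
        linear_combination h4
      rw [← key, mul_assoc, hd12, mul_one]
    case hj =>
      intro k hk
      simp only [Finset.mem_filter, Finset.mem_range] at hk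
      simp only [hS, Finset.mem_filter, Finset.mem_product, Finset.mem_range]
      obtain ⟨hk1, hk2⟩ := hk
      refine ⟨⟨⟨hk1, by omega⟩, by omega, ?_⟩, by omega⟩
      have hc : ((m - 1 - k : ℕ) : ZMod n) = ((m - 1 : ℕ) : ZMod n) - (k : ZMod n) := by
        rw [Nat.cast_sub (by omega)]
      rw [hc, hk2]
      have key : (v - ((m - 1 : ℕ) : ZMod n) * d2) * (d1 - d2)⁻¹ * (d1 - d2)
          = v - ((m - 1 : ℕ) : ZMod n) * d2 := by
        rw [mul_assoc, hd12', mul_one]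
      linear_combination key
    case left =>
      intro p hp
      simp only [hS, Finset.mem_filter, Finset.mem_product, Finset.mem_range] at hp
      obtain ⟨⟨⟨h1, h2'⟩, h3, h4⟩, h5⟩ := hp
      have h6 : m - 1 - p.1 = p.2 := by omega
      simp [Prod.ext_iff, h6]
    case right =>
      intro k hk
      rfl
  show (S (v + d1)).card = (S v).card
  rw [← split1, ← split2, hbij, hA, hB, count_range_cast, count_range_cast]
  rcases hm with hd | hd
  · obtain ⟨q, rfl⟩ := hd
    simp [Nat.mul_mod_right]
    omega
  · have hmod : m % n = n - 1 := by
      obtain ⟨q, hq⟩ := hd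
      have hq0 : 0 < q := by
        rcases Nat.eq_zero_or_pos q with rfl | h
        · omega
        · exact h
      have h2' : n * (q - 1) + n = n * q := by
        rw [← Nat.mul_succ]
        congr 1
        omega
      have h1' : m = n * (q - 1) + (n - 1) := by omega
      rw [h1', Nat.mul_add_mod, Nat.mod_eq_of_lt (by omega)]
    rw [hmod]
    have hm1 : ((m - 1 : ℕ) : ZMod n) = -2 := by
      have h0 : ((m + 1 : ℕ) : ZMod n) = 0 := by
        rw [ZMod.natCast_eq_zero_iff]
        exact hd
      push_cast at h0
      rw [Nat.cast_sub hm0]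
      push_cast
      linear_combination h0
    have e1 : (v + d1) * d2⁻¹ = -1 ↔ v + d1 = -d2 := by
      constructor
      · intro h; linear_combination d2 * h - (v + d1) * hd2'
      · intro h; linear_combination d2⁻¹ * h - hd2
    have e2 : (v - ((m - 1 : ℕ) : ZMod n) * d2) * (d1 - d2)⁻¹ = -1
        ↔ v - ((m - 1 : ℕ) : ZMod n) * d2 = -(d1 - d2) := by
      constructor
      · intro h
        linear_combination (d1 - d2) * h - (v - ((m - 1 : ℕ) : ZMod n) * d2) * hd12'
      · intro h; linear_combination (d1 - d2)⁻¹ * h - hd12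
    have e3 : (v + d1 = -d2) ↔ (v - ((m - 1 : ℕ) : ZMod n) * d2 = -(d1 - d2)) := by
      rw [hm1]
      constructor <;> intro h <;> linear_combination h
    have hiff : (((v + d1) * d2⁻¹).val < n - 1)
        ↔ (((v - ((m - 1 : ℕ) : ZMod n) * d2) * (d1 - d2)⁻¹).val < n - 1) := by
      rw [val_lt_iff, val_lt_iff]
      exact not_congr (e1.trans (e3.trans e2.symm))
    rw [if_congr hiff rfl rfl]
    omega

theorem stmt2 (n : ℕ) (hn : Odd n) (d1 d2 : ZMod n)
    (h1 : IsUnit d1) (h2 : IsUnit d2) (h12 : IsUnit (d1 - d2)) :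
    ∀ m : ℕ, 0 < m → (n ∣ m ∨ n ∣ (m + 1)) →
      ∀ a : ZMod n, IsBalanced (DAT n a d1 d2 m) := by
  intro m hm0 hm a
  have hn0 : 0 < n := by
    rcases hn with ⟨k, hk⟩; omega
  haveI : NeZero n := ⟨hn0.ne'⟩
  intro x y
  have hcount : ∀ z : ZMod n, (DAT n a d1 d2 m).count z = Scount n m d1 d2 (z - a) := by
    intro z
    classical
    rw [DAT, Multiset.count_map, ← Finset.filter_val, Finset.filter_filter]
    show (Finset.filter _ _).card = _
    unfold Scount
    congr 1
    apply Finset.filter_congr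
    intro p _
    simp only [nsmul_eq_mul]
    constructor
    · rintro ⟨hlt, heq⟩
      exact ⟨hlt, by linear_combination -heq⟩
    · rintro ⟨hlt, heq⟩
      exact ⟨hlt, by linear_combination -heq⟩
  have hshift : ∀ (k : ℕ) (v : ZMod n),
      Scount n m d1 d2 (v + k • d1) = Scount n m d1 d2 v := by
    intro k
    induction k with
    | zero => simp
    | succ k ih =>
      intro v
      have hv : v + (k+1) • d1 = (v + k • d1) + d1 := by
        rw [succ_nsmul]; ring
      rw [hv, scount_shift n d1 d2 h2 h12 m hm0 hm, ih]
  rw [hcount x, hcount y]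
  set k := ((y - x) * d1⁻¹).val with hkdef
  have hk : (k : ZMod n) * d1 = y - x := by
    rw [hkdef, ZMod.natCast_rightInverse ((y - x) * d1⁻¹), mul_assoc,
      ZMod.inv_mul_of_unit d1 h1, mul_one]
  have hy : y - a = (x - a) + k • d1 := by
    rw [nsmul_eq_mul, hk]; ring
  rw [hy, hshift]
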